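/- Let μ be the stationary distribution of the boundary driven symmetric simple exclusion process on {0,1}^M. Then E_μ[σ(i)] = (M + 1/2 - i)/M for all i ∈ [M]. -/

import Mathlib

def exch {M : ℕ} (σ : Fin M → Bool) (a b : Fin M) : Fin M → Bool :=
  Function.update (Function.update σ a (σ b)) b (σ a)

def flipAt {M : ℕ} (σ : Fin M → Bool) (a : Fin M) : Fin M → Bool :=
  Function.update σ a (!σ a)

/-- Generator of the boundary driven symmetric simple exclusion process on `{0,1}^M`
(sites 1,…,M correspond to indices 0,…,M-1): symmetric exchanges at rate 1/2,
creation at site 1 at rate `1-σ(1)`, annihilation at site M at rate `σ(M)`. -/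
noncomputable def bdGen (M : ℕ) (hM : 0 < M) (f : (Fin M → Bool) → ℝ)
    (σ : Fin M → Bool) : ℝ :=
  (∑ x : Fin M, if h : x.val + 1 < M then
      (1 / 2) * (f (exch σ x ⟨x.val + 1, h⟩) - f σ) else 0)
  + (if σ ⟨0, hM⟩ = false then 1 else 0) * (f (flipAt σ ⟨0, hM⟩) - f σ)
  + (if σ ⟨M - 1, by omega⟩ = true then 1 else 0) * (f (flipAt σ ⟨M - 1, by omega⟩) - f σ)

noncomputable def G {M : ℕ} (σ : Fin M → Bool) (i : Fin M) : ℝ := if σ i then 1 else 0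

lemma exch_apply {M : ℕ} (σ : Fin M → Bool) (a b i : Fin M) :
    exch σ a b i = if i = b then σ a else if i = a then σ b else σ i := by
  simp [exch, Function.update_apply]

lemma gen_eval {M : ℕ} (hM : 0 < M) (i : Fin M) (σ : Fin M → Bool) :
    bdGen M hM (fun τ => G τ i) σ =
      (if h : i.val + 1 < M then (1/2) * (G σ ⟨i.val+1, h⟩ - G σ i) else 0)
    + (if 0 < i.val then (1/2) * (G σ ⟨i.val-1, Nat.lt_of_le_of_lt (Nat.sub_le _ _) i.isLt⟩ - G σ i) else 0)
    + (if i.val = 0 then 1 - G σ i else 0)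
    + (if i.val = M - 1 then - G σ i else 0) := by
  have key : ∀ x : Fin M,
      (if h : x.val + 1 < M then (1/2 : ℝ) * (G (exch σ x ⟨x.val + 1, h⟩) i - G σ i) else 0)
      = (if x = i then (if h : i.val + 1 < M then (1/2) * (G σ ⟨i.val+1, h⟩ - G σ i) else 0) else 0)
      + (if x.val + 1 = i.val then (1/2) * (G σ ⟨i.val-1, Nat.lt_of_le_of_lt (Nat.sub_le _ _) i.isLt⟩ - G σ i) else 0) := by
    intro x
    by_cases h1 : x = i
    · subst h1
      have h2 : ¬ (x.val + 1 = x.val) := by omega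
      simp only [if_pos rfl, if_neg h2, add_zero]
      by_cases h : x.val + 1 < M
      · rw [dif_pos h, dif_pos h]
        congr 2
        · simp [G, exch_apply, Fin.ext_iff]
      · rw [dif_neg h, dif_neg h]; simp
    · by_cases h2 : x.val + 1 = i.val
      · have hlt : x.val + 1 < M := by omega
        rw [dif_pos hlt, if_neg h1, if_pos h2, zero_add]
        have hib : i = (⟨x.val + 1, hlt⟩ : Fin M) := by simp [Fin.ext_iff]; omega
        have hx : x = (⟨i.val - 1, Nat.lt_of_le_of_lt (Nat.sub_le _ _) i.isLt⟩ : Fin M) := by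
          simp [Fin.ext_iff]; omega
        congr 2
        rw [hib]
        simp [G, exch_apply, ← hx]
      · rw [if_neg h1, if_neg h2, add_zero]
        by_cases h : x.val + 1 < M
        · rw [dif_pos h]
          have : G (exch σ x ⟨x.val + 1, h⟩) i = G σ i := by
            have e1 : ¬ (i.val = x.val + 1) := by omega
            have e2 : ¬ (i.val = x.val) := fun hc => h1 (Fin.ext hc.symm)
            simp [G, exch_apply, Fin.ext_iff, e1, e2]
          rw [this]; ring
        · rw [dif_neg h]
  unfold bdGen
  rw [Finset.sum_congr rfl (fun x _ => key x), Finset.sum_add_distrib]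
  have s1 : (∑ x : Fin M, if x = i then (if h : i.val + 1 < M then (1/2:ℝ) * (G σ ⟨i.val+1, h⟩ - G σ i) else 0) else 0)
      = (if h : i.val + 1 < M then (1/2:ℝ) * (G σ ⟨i.val+1, h⟩ - G σ i) else 0) := by
    rw [Finset.sum_ite_eq' Finset.univ i]
    simp
  have s2 : (∑ x : Fin M, if x.val + 1 = i.val then (1/2:ℝ) * (G σ ⟨i.val-1, Nat.lt_of_le_of_lt (Nat.sub_le _ _) i.isLt⟩ - G σ i) else 0)
      = (if 0 < i.val then (1/2:ℝ) * (G σ ⟨i.val-1, Nat.lt_of_le_of_lt (Nat.sub_le _ _) i.isLt⟩ - G σ i) else 0) := by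
    by_cases hi : 0 < i.val
    · rw [if_pos hi]
      have hc : ∀ x : Fin M, (x.val + 1 = i.val) ↔ x = ⟨i.val - 1, Nat.lt_of_le_of_lt (Nat.sub_le _ _) i.isLt⟩ := by
        intro x; rw [Fin.ext_iff]; constructor <;> intro h <;> simp at h ⊢ <;> omega
      rw [Finset.sum_congr rfl (fun x _ => by rw [if_congr (hc x) rfl rfl])]
      rw [Finset.sum_ite_eq' Finset.univ]
      simp
    · rw [if_neg hi]
      apply Finset.sum_eq_zero
      intro x _
      rw [if_neg (by omega)]
  rw [s1, s2]
  have b1 : (if σ ⟨0, hM⟩ = false then (1:ℝ) else 0) * (G (flipAt σ ⟨0, hM⟩) i - G σ i)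
      = (if i.val = 0 then 1 - G σ i else 0) := by
    by_cases hi : i.val = 0
    · have hii : i = ⟨0, hM⟩ := Fin.ext hi
      rw [if_pos hi, hii]
      cases h : σ ⟨0, hM⟩ <;> simp [G, flipAt, h]
    · have hne : i ≠ ⟨0, hM⟩ := fun h => hi (by rw [h])
      rw [if_neg hi]
      have : G (flipAt σ ⟨0, hM⟩) i = G σ i := by
        simp [G, flipAt, Function.update_of_ne hne]
      rw [this]; ring
  have b2 : (if σ ⟨M-1, by omega⟩ = true then (1:ℝ) else 0) * (G (flipAt σ ⟨M-1, by omega⟩) i - G σ i)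
      = (if i.val = M - 1 then - G σ i else 0) := by
    by_cases hi : i.val = M - 1
    · have hii : i = ⟨M-1, by omega⟩ := Fin.ext hi
      rw [if_pos hi, hii]
      cases h : σ (⟨M-1, by omega⟩ : Fin M) <;> simp [G, flipAt, h]
    · have hne : i ≠ ⟨M-1, by omega⟩ := fun h => hi (by rw [h])
      rw [if_neg hi]
      have : G (flipAt σ ⟨M-1, by omega⟩) i = G σ i := by
        simp [G, flipAt, Function.update_of_ne hne]
      rw [this]; ring
  rw [b1, b2]

lemma profile (M : ℕ) (hM : 0 < M) (r : ℕ → ℝ)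
    (heq : ∀ n, n < M →
      (if n+1 < M then (1/2 : ℝ)*(r (n+1) - r n) else 0)
      + (if 0 < n then (1/2 : ℝ)*(r (n-1) - r n) else 0)
      + (if n = 0 then 1 - r n else 0)
      + (if n = M-1 then - r n else 0) = 0) :
    ∀ n, n < M → r n = ((M:ℝ) + 1/2 - (n+1))/M := by
  rcases eq_or_lt_of_le (show 1 ≤ M from hM) with h1 | h2
  · -- M = 1
    intro n hn
    have hn0 : n = 0 := by omega
    subst hn0
    have := heq 0 (by omega)
    rw [if_neg (by omega), if_neg (by omega), if_pos rfl, if_pos (by omega)] at this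
    rw [← h1]
    push_cast
    linarith
  · -- M ≥ 2
    obtain ⟨k, rfl⟩ : ∃ k, M = k + 2 := ⟨M - 2, by omega⟩
    set c : ℝ := r 1 - r 0 with hc
    have step : ∀ n, n + 1 < k + 2 → r (n+1) - r n = c := by
      intro n
      induction n with
      | zero => intro _; rfl
      | succ m ih =>
        intro hm
        have := heq (m+1) (by omega)
        rw [if_pos (by omega), if_pos (by omega), if_neg (by omega), if_neg (by omega)] at this
        simp only [Nat.add_sub_cancel] at this
        have ihm := ih (by omega)
        have : r (m+1+1) - r (m+1) = r (m+1) - r m := by linarith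
        rw [this, ihm]
    have lin : ∀ n, n < k + 2 → r n = r 0 + n * c := by
      intro n
      induction n with
      | zero => intro _; simp
      | succ m ih =>
        intro hm
        have h1 := step m (by omega)
        have h2 := ih (by omega)
        push_cast
        linarith
    have eq0 := heq 0 (by omega)
    rw [if_pos (by omega), if_neg (by omega), if_pos rfl, if_neg (by omega)] at eq0
    have eqM := heq (k+1) (by omega)
    rw [if_neg (by omega), if_pos (by omega), if_neg (by omega), if_pos (by omega)] at eqM
    simp only [Nat.add_sub_cancel] at eqM
    have hrk : r k = r 0 + k * c := lin k (by omega)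
    have hrk1 : r (k+1) = r 0 + (k+1) * c := by
      have := lin (k+1) (by omega)
      push_cast at this ⊢
      linarith
    have hr1 : r 1 = r 0 + c := by rw [hc]; ring
    -- solve for c
    have hceq : c = -1 / (k+2 : ℝ) := by
      have hk : (0:ℝ) < (k:ℝ) + 2 := by positivity
      field_simp
      nlinarith [eq0, eqM, hrk, hrk1]
    intro n hn
    have := lin n hn
    rw [this, hceq]
    have hr0 : r 0 = 1 + (-1/(k+2:ℝ))/2 := by
      have h01 : (0:ℕ)+1 = 1 := rfl
      rw [h01] at eq0
      have hcc : r 1 - r 0 = -1/(k+2:ℝ) := by rw [← hc, hceq]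
      linarith
    rw [hr0]
    have hk : ((k:ℝ) + 2) ≠ 0 := by positivity
    push_cast
    field_simp
    ring

noncomputable def rho {M : ℕ} (μ : (Fin M → Bool) → ℝ) (j : Fin M) : ℝ :=
  ∑ σ, μ σ * G σ j

noncomputable def rr (M : ℕ) (μ : (Fin M → Bool) → ℝ) (n : ℕ) : ℝ :=
  if h : n < M then rho μ ⟨n, h⟩ else 0


/-- Linear density profile of the stationary distribution:
`E_μ[σ(i)] = (M + 1/2 - i)/M` for all sites `i ∈ [M]`. -/
theorem stmt5 (M : ℕ) (hM : 0 < M) (μ : (Fin M → Bool) → ℝ)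
    (hpos : ∀ σ, 0 ≤ μ σ) (hsum : ∑ σ, μ σ = 1)
    (hstat : ∀ f : (Fin M → Bool) → ℝ, ∑ σ, μ σ * bdGen M hM f σ = 0) :
    ∀ i : Fin M,
      (∑ σ, μ σ * (if σ i = true then (1 : ℝ) else 0))
        = ((M : ℝ) + 1 / 2 - (i.val + 1)) / M := by

  have pull : ∀ (p : Prop) (inst : Decidable p) (f : p → (Fin M → Bool) → ℝ),
      (∑ σ, μ σ * (dite p (fun h => f h σ) (fun _ => (0:ℝ))))
        = dite p (fun h => ∑ σ, μ σ * f h σ) (fun _ => 0) := by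
    intro p inst f
    by_cases hp : p <;> simp [hp]
  have pull2 : ∀ (p : Prop) (inst : Decidable p) (f : (Fin M → Bool) → ℝ),
      (∑ σ, μ σ * (if p then f σ else (0:ℝ))) = if p then ∑ σ, μ σ * f σ else 0 := by
    intro p inst f
    by_cases hp : p <;> simp [hp]
  have hA : ∀ a b : Fin M, (∑ σ, μ σ * ((1/2:ℝ)*(G σ a - G σ b)))
      = (1/2)*(rho μ a - rho μ b) := by
    intro a b
    rw [Finset.sum_congr rfl (fun σ _ => show μ σ * ((1/2:ℝ)*(G σ a - G σ b))
      = (1/2)*(μ σ * G σ a) - (1/2)*(μ σ * G σ b) by ring)]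
    rw [Finset.sum_sub_distrib, ← Finset.mul_sum, ← Finset.mul_sum]
    rw [rho, rho]; ring
  have hC : ∀ j : Fin M, (∑ σ, μ σ * (1 - G σ j)) = 1 - rho μ j := by
    intro j
    rw [Finset.sum_congr rfl (fun σ _ => show μ σ * (1 - G σ j)
      = μ σ - μ σ * G σ j by ring)]
    rw [Finset.sum_sub_distrib, hsum, rho]
  have hD : ∀ j : Fin M, (∑ σ, μ σ * (- G σ j)) = - rho μ j := by
    intro j
    rw [Finset.sum_congr rfl (fun σ _ => show μ σ * (- G σ j)
      = - (μ σ * G σ j) by ring)]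
    rw [Finset.sum_neg_distrib, rho]
  have heqFin : ∀ j : Fin M,
      (if h : j.val + 1 < M then (1/2:ℝ) * (rho μ ⟨j.val+1, h⟩ - rho μ j) else 0)
      + (if 0 < j.val then (1/2:ℝ) * (rho μ ⟨j.val-1, Nat.lt_of_le_of_lt (Nat.sub_le _ _) j.isLt⟩ - rho μ j) else 0)
      + (if j.val = 0 then 1 - rho μ j else 0)
      + (if j.val = M - 1 then - rho μ j else 0) = 0 := by
    intro j
    have hs := hstat (fun τ => G τ j)
    rw [Finset.sum_congr rfl (fun σ _ => by rw [gen_eval hM j σ])] at hs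
    simp only [mul_add, Finset.sum_add_distrib] at hs
    rw [pull, pull2, pull2, pull2] at hs
    simp only [hA, hC, hD] at hs
    exact hs
  have heqNat : ∀ n, n < M →
      (if n+1 < M then (1/2 : ℝ)*(rr M μ (n+1) - rr M μ n) else 0)
      + (if 0 < n then (1/2 : ℝ)*(rr M μ (n-1) - rr M μ n) else 0)
      + (if n = 0 then 1 - rr M μ n else 0)
      + (if n = M-1 then - rr M μ n else 0) = 0 := by
    intro n hn
    have h := heqFin ⟨n, hn⟩
    simp only [Fin.val_mk] at h
    have hrn : rr M μ n = rho μ ⟨n, hn⟩ := dif_pos hn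
    by_cases h1 : n + 1 < M
    · rw [dif_pos h1] at h
      rw [if_pos h1]
      have : rr M μ (n+1) = rho μ ⟨n+1, h1⟩ := dif_pos h1
      rw [this, hrn]
      by_cases h2 : 0 < n
      · rw [if_pos h2] at h ⊢
        have : rr M μ (n-1) = rho μ ⟨n-1, Nat.lt_of_le_of_lt (Nat.sub_le _ _) hn⟩ :=
          dif_pos (Nat.lt_of_le_of_lt (Nat.sub_le _ _) hn)
        rw [this]
        exact h
      · rw [if_neg h2] at h ⊢; exact h
    · rw [dif_neg h1] at h
      rw [if_neg h1]
      by_cases h2 : 0 < n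
      · rw [if_pos h2] at h ⊢
        have : rr M μ (n-1) = rho μ ⟨n-1, Nat.lt_of_le_of_lt (Nat.sub_le _ _) hn⟩ :=
          dif_pos (Nat.lt_of_le_of_lt (Nat.sub_le _ _) hn)
        rw [this, hrn]
        exact h
      · rw [if_neg h2] at h ⊢; rw [hrn]; exact h
  intro i
  have := profile M hM (rr M μ) heqNat i.val i.isLt
  have hri : rr M μ i.val = rho μ i := by
    rw [rr, dif_pos i.isLt]
  rw [hri] at this
  rw [show (∑ σ, μ σ * (if σ i = true then (1:ℝ) else 0)) = rho μ i from rfl]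
  exact this
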